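/- Let Γ1 = (V1, E1) be a connected cubic graph with a bridge e1 = (a,b), where the other two neighbours of a are c and d. Let v1, v2 be two new vertices and let ΓD be the graph with vertex set V1 ∪ {v1, v2} and edge set (E1 \ {(a,c), (a,d)}) ∪ {(a,v1), (a,v2), (v1,v2), (v1,c), (v2,d)}. Then ΓD is a connected cubic graph and the edge (a,b) is still a bridge of ΓD. -/

import Mathlib

open SimpleGraph

/-- A graph is cubic if every vertex has exactly three neighbours. -/
def IsCubic {V : Type*} (G : SimpleGraph V) : Prop :=
  ∀ v : V, (G.neighborSet v).ncard = 3

/-- A cracker of `G`: a nonempty set of edges of `G`, no two of which share a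
vertex, whose deletion disconnects `G`, while no proper subset disconnects `G`. -/
def IsCracker {V : Type*} (G : SimpleGraph V) (C : Set (Sym2 V)) : Prop :=
  C.Nonempty ∧ C ⊆ G.edgeSet ∧
    C.Pairwise (fun e f => ∀ v : V, ¬(v ∈ e ∧ v ∈ f)) ∧
    ¬(G.deleteEdges C).Connected ∧
    ∀ C' : Set (Sym2 V), C' ⊂ C → (G.deleteEdges C').Connected

/-- A `k`-cracker is a cracker consisting of `k` edges. -/
def IsKCracker {V : Type*} (G : SimpleGraph V) (C : Set (Sym2 V)) (k : ℕ) : Prop :=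
  IsCracker G C ∧ C.ncard = k

/-- The type 3 parthenogenic operation: at a vertex a incident to a bridge (a,b), with
other neighbours c and d, delete the edges (a,c), (a,d) and insert a parthenogenic
triangle on two new vertices v₁, v₂ (here Fin 2) with edges (a,v₁), (a,v₂), (v₁,v₂),
(v₁,c), (v₂,d). -/
def parth3 {V₁ : Type*} (G₁ : SimpleGraph V₁) (a c d : V₁) : SimpleGraph (V₁ ⊕ Fin 2) :=
  SimpleGraph.fromRel (fun p q =>
    (∃ x y : V₁, p = Sum.inl x ∧ q = Sum.inl y ∧ G₁.Adj x y ∧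
        s(x, y) ≠ s(a, c) ∧ s(x, y) ≠ s(a, d)) ∨
    (p = Sum.inl a ∧ q = Sum.inr 0) ∨
    (p = Sum.inl a ∧ q = Sum.inr 1) ∨
    (p = Sum.inr 0 ∧ q = Sum.inr 1) ∨
    (p = Sum.inr 0 ∧ q = Sum.inl c) ∨
    (p = Sum.inr 1 ∧ q = Sum.inl d))

/-- inserting a parthenogenic triangle next to a bridge (a,b) of a
connected cubic graph yields a connected cubic graph in which (a,b) is still a bridge. -/
theorem parth3_spec {V₁ : Type*} (G₁ : SimpleGraph V₁)
    (h₁ : G₁.Connected) (hc₁ : IsCubic G₁) (a b c d : V₁)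
    (hbr : G₁.IsBridge s(a, b))
    (hac : G₁.Adj a c) (had : G₁.Adj a d)
    (hcd : c ≠ d) (hcb : c ≠ b) (hdb : d ≠ b) :
    (parth3 G₁ a c d).Connected ∧ IsCubic (parth3 G₁ a c d) ∧
      (parth3 G₁ a c d).IsBridge s(Sum.inl a, Sum.inl b) := by
    classical
  obtain ⟨hab, hnr⟩ : G₁.Adj a b ∧ _ :=
    ⟨hbr.reachable_iff_adj.mp (h₁.preconnected a b), isBridge_iff.mp hbr⟩
  have hanb : a ≠ b := hab.ne
  have hanc : a ≠ c := hac.ne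
  have hand : a ≠ d := had.ne
  -- s(a,b) is distinct from s(a,c) and s(a,d)
  have hsb_c : s(a, b) ≠ s(a, c) := by
    simp only [Ne, Sym2.eq_iff]; push_neg
    exact ⟨fun _ => hcb.symm, fun h => absurd h hanc⟩
  have hsb_d : s(a, b) ≠ s(a, d) := by
    simp only [Ne, Sym2.eq_iff]; push_neg
    exact ⟨fun _ => hdb.symm, fun h => absurd h hand⟩
  -- characterization of adjacency from an inl vertex
  have hchar : ∀ (x : V₁) (q : V₁ ⊕ Fin 2), (parth3 G₁ a c d).Adj (Sum.inl x) q ↔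
      ((∃ y, q = Sum.inl y ∧ G₁.Adj x y ∧ s(x, y) ≠ s(a, c) ∧ s(x, y) ≠ s(a, d)) ∨
        (x = a ∧ q = Sum.inr 0) ∨ (x = a ∧ q = Sum.inr 1) ∨
        (x = c ∧ q = Sum.inr 0) ∨ (x = d ∧ q = Sum.inr 1)) := by
    intro x q
    rw [parth3, fromRel_adj]
    constructor
    · rintro ⟨hne, h | h⟩
      · rcases h with ⟨x', y, hx, rfl, hxy, h1, h2⟩ | ⟨hx, rfl⟩ | ⟨hx, rfl⟩ |
          ⟨hx, _⟩ | ⟨hx, _⟩ | ⟨hx, _⟩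
        · obtain rfl : x = x' := Sum.inl.inj hx
          exact Or.inl ⟨y, rfl, hxy, h1, h2⟩
        · exact Or.inr (Or.inl ⟨Sum.inl.inj hx, rfl⟩)
        · exact Or.inr (Or.inr (Or.inl ⟨Sum.inl.inj hx, rfl⟩))
        · exact absurd hx (by simp)
        · exact absurd hx (by simp)
        · exact absurd hx (by simp)
      · rcases h with ⟨x', y, hq, hy, hxy, h1, h2⟩ | ⟨_, hx⟩ | ⟨_, hx⟩ |
          ⟨_, hx⟩ | ⟨hq, hx⟩ | ⟨hq, hx⟩
        · obtain rfl : x = y := Sum.inl.inj hy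
          exact Or.inl ⟨x', hq, hxy.symm, Sym2.eq_swap ▸ h1, Sym2.eq_swap ▸ h2⟩
        · exact absurd hx (by simp)
        · exact absurd hx (by simp)
        · exact absurd hx (by simp)
        · exact Or.inr (Or.inr (Or.inr (Or.inl ⟨Sum.inl.inj hx, hq⟩)))
        · exact Or.inr (Or.inr (Or.inr (Or.inr ⟨Sum.inl.inj hx, hq⟩)))
    · rintro (⟨y, rfl, hxy, h1, h2⟩ | ⟨rfl, rfl⟩ | ⟨rfl, rfl⟩ | ⟨rfl, rfl⟩ | ⟨rfl, rfl⟩)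
      · exact ⟨by simpa using hxy.ne, Or.inl (Or.inl ⟨x, y, rfl, rfl, hxy, h1, h2⟩)⟩
      · exact ⟨by simp, Or.inl (Or.inr (Or.inl ⟨rfl, rfl⟩))⟩
      · exact ⟨by simp, Or.inl (Or.inr (Or.inr (Or.inl ⟨rfl, rfl⟩)))⟩
      · exact ⟨by simp, Or.inr (Or.inr (Or.inr (Or.inr (Or.inr (Or.inl ⟨rfl, rfl⟩)))))⟩
      · exact ⟨by simp, Or.inr (Or.inr (Or.inr (Or.inr (Or.inr (Or.inr ⟨rfl, rfl⟩)))))⟩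
  set H := parth3 G₁ a c d with hHdef
  -- adjacency characterizations from the new vertices
  have hchar0 : ∀ q, H.Adj (Sum.inr 0) q ↔ (q = Sum.inl a ∨ q = Sum.inr 1 ∨ q = Sum.inl c) := by
    intro q
    rw [hHdef, parth3, fromRel_adj]
    constructor
    · rintro ⟨hne, h | h⟩ <;>
        rcases h with ⟨x, y, hx, hy, -, -, -⟩ | ⟨hx, hy⟩ | ⟨hx, hy⟩ | ⟨hx, hy⟩ |
          ⟨hx, hy⟩ | ⟨hx, hy⟩ <;> simp_all
    · rintro (rfl | rfl | rfl)
      · exact ⟨by simp, Or.inr (Or.inr (Or.inl ⟨rfl, rfl⟩))⟩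
      · refine ⟨fun h => absurd (Sum.inr.inj h) (by decide), ?_⟩
        exact Or.inl (Or.inr (Or.inr (Or.inr (Or.inl ⟨rfl, rfl⟩))))
      · exact ⟨by simp, Or.inl (Or.inr (Or.inr (Or.inr (Or.inr (Or.inl ⟨rfl, rfl⟩)))))⟩
  have hchar1 : ∀ q, H.Adj (Sum.inr 1) q ↔ (q = Sum.inl a ∨ q = Sum.inr 0 ∨ q = Sum.inl d) := by
    intro q
    rw [hHdef, parth3, fromRel_adj]
    constructor
    · rintro ⟨hne, h | h⟩ <;>
        rcases h with ⟨x, y, hx, hy, -, -, -⟩ | ⟨hx, hy⟩ | ⟨hx, hy⟩ | ⟨hx, hy⟩ |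
          ⟨hx, hy⟩ | ⟨hx, hy⟩ <;> simp_all
    · rintro (rfl | rfl | rfl)
      · exact ⟨by simp, Or.inr (Or.inr (Or.inr (Or.inl ⟨rfl, rfl⟩)))⟩
      · refine ⟨fun h => absurd (Sum.inr.inj h) (by decide), ?_⟩
        exact Or.inr (Or.inr (Or.inr (Or.inr (Or.inl ⟨rfl, rfl⟩))))
      · exact ⟨by simp, Or.inl (Or.inr (Or.inr (Or.inr (Or.inr (Or.inr ⟨rfl, rfl⟩)))))⟩
  -- the neighbourhood of a in G₁
  have hNafin : (G₁.neighborSet a).Finite :=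
    Set.finite_of_ncard_ne_zero (by rw [hc₁ a]; norm_num)
  have hNa : G₁.neighborSet a = {b, c, d} := by
    symm
    apply Set.eq_of_subset_of_ncard_le
    · rintro x hx
      simp only [Set.mem_insert_iff, Set.mem_singleton_iff] at hx
      rcases hx with rfl | rfl | rfl
      exacts [hab, hac, had]
    · rw [hc₁ a, Set.ncard_insert_of_notMem (by simp [hcb.symm, hdb.symm]) (Set.toFinite _),
        Set.ncard_pair hcd]
    · exact hNafin
  -- cubicity
  have hcub : IsCubic H := by
    intro v
    cases v with
    | inr i =>
      fin_cases i
      · show (H.neighborSet (Sum.inr 0)).ncard = 3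
        have h0 : H.neighborSet (Sum.inr 0) = {Sum.inl a, Sum.inr 1, Sum.inl c} := by
          ext q; rw [mem_neighborSet, hchar0]; simp
        rw [h0]
        exact Set.ncard_eq_three.mpr ⟨_, _, _, by simp, by simp [hanc], by simp, rfl⟩
      · show (H.neighborSet (Sum.inr 1)).ncard = 3
        have h0 : H.neighborSet (Sum.inr 1) = {Sum.inl a, Sum.inr 0, Sum.inl d} := by
          ext q; rw [mem_neighborSet, hchar1]; simp
        rw [h0]
        exact Set.ncard_eq_three.mpr ⟨_, _, _, by simp, by simp [hand], by simp, rfl⟩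
    | inl x =>
      by_cases hxa : x = a
      · subst hxa
        have h0 : H.neighborSet (Sum.inl x) = {Sum.inl b, Sum.inr 0, Sum.inr 1} := by
          ext q; rw [mem_neighborSet, hchar]
          constructor
          · rintro (⟨y, rfl, hay, h1, h2⟩ | ⟨-, rfl⟩ | ⟨-, rfl⟩ | ⟨hca, rfl⟩ | ⟨hda, rfl⟩)
            · have hy : y ∈ G₁.neighborSet x := hay
              rw [hNa] at hy
              simp only [Set.mem_insert_iff, Set.mem_singleton_iff] at hy
              rcases hy with rfl | rfl | rfl
              · exact Or.inl rfl
              · exact absurd rfl h1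
              · exact absurd rfl h2
            · exact Or.inr (Or.inl rfl)
            · exact Or.inr (Or.inr rfl)
            · exact absurd hca hanc
            · exact absurd hda hand
          · rintro (rfl | rfl | rfl)
            · exact Or.inl ⟨b, rfl, hab, hsb_c, hsb_d⟩
            · exact Or.inr (Or.inl ⟨rfl, rfl⟩)
            · exact Or.inr (Or.inr (Or.inl ⟨rfl, rfl⟩))
        rw [h0]
        exact Set.ncard_eq_three.mpr ⟨_, _, _, by simp, by simp, by simp [Fin.ext_iff], rfl⟩
      · by_cases hxc : x = c
        · subst hxc
          have hfin : (G₁.neighborSet x).Finite :=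
            Set.finite_of_ncard_ne_zero (by rw [hc₁ x]; norm_num)
          have h0 : H.neighborSet (Sum.inl x) =
              insert (Sum.inr 0) (Sum.inl '' (G₁.neighborSet x \ {a})) := by
            ext q; rw [mem_neighborSet, hchar]
            constructor
            · rintro (⟨y, rfl, hcy, h1, h2⟩ | ⟨h, -⟩ | ⟨h, -⟩ | ⟨-, rfl⟩ | ⟨h, -⟩)
              · refine Or.inr ⟨y, ⟨hcy, ?_⟩, rfl⟩
                rintro rfl
                exact h1 Sym2.eq_swap
              · exact absurd h.symm hanc
              · exact absurd h.symm hanc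
              · exact Or.inl rfl
              · exact absurd h hcd
            · rintro (rfl | ⟨y, ⟨hy, hya⟩, rfl⟩)
              · exact Or.inr (Or.inr (Or.inr (Or.inl ⟨rfl, rfl⟩)))
              · refine Or.inl ⟨y, rfl, hy, ?_, ?_⟩
                · rw [Ne, Sym2.eq_iff]
                  push_neg
                  exact ⟨fun h => absurd h.symm hanc, fun _ => hya⟩
                · rw [Ne, Sym2.eq_iff]
                  push_neg
                  exact ⟨fun h => absurd h.symm hanc, fun h => absurd h hcd⟩
          rw [h0, Set.ncard_insert_of_notMem (by simp) ((hfin.subset Set.diff_subset).image _),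
            Set.ncard_image_of_injective _ Sum.inl_injective,
            Set.ncard_diff_singleton_of_mem (s := G₁.neighborSet x) hac.symm, hc₁ x]
        · by_cases hxd : x = d
          · subst hxd
            have hfin : (G₁.neighborSet x).Finite :=
              Set.finite_of_ncard_ne_zero (by rw [hc₁ x]; norm_num)
            have h0 : H.neighborSet (Sum.inl x) =
                insert (Sum.inr 1) (Sum.inl '' (G₁.neighborSet x \ {a})) := by
              ext q; rw [mem_neighborSet, hchar]
              constructor
              · rintro (⟨y, rfl, hdy, h1, h2⟩ | ⟨h, -⟩ | ⟨h, -⟩ | ⟨h, -⟩ | ⟨-, rfl⟩)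
                · refine Or.inr ⟨y, ⟨hdy, ?_⟩, rfl⟩
                  rintro rfl
                  exact h2 Sym2.eq_swap
                · exact absurd h.symm hand
                · exact absurd h.symm hand
                · exact absurd h.symm hcd
                · exact Or.inl rfl
              · rintro (rfl | ⟨y, ⟨hy, hya⟩, rfl⟩)
                · exact Or.inr (Or.inr (Or.inr (Or.inr ⟨rfl, rfl⟩)))
                · refine Or.inl ⟨y, rfl, hy, ?_, ?_⟩
                  · rw [Ne, Sym2.eq_iff]
                    push_neg
                    exact ⟨fun h => absurd h.symm hand, fun h => absurd h hcd.symm⟩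
                  · rw [Ne, Sym2.eq_iff]
                    push_neg
                    exact ⟨fun h => absurd h.symm hand, fun _ => hya⟩
            rw [h0, Set.ncard_insert_of_notMem (by simp) ((hfin.subset Set.diff_subset).image _),
              Set.ncard_image_of_injective _ Sum.inl_injective,
              Set.ncard_diff_singleton_of_mem (s := G₁.neighborSet x) had.symm, hc₁ x]
          · have h0 : H.neighborSet (Sum.inl x) = Sum.inl '' G₁.neighborSet x := by
              ext q; rw [mem_neighborSet, hchar]
              constructor
              · rintro (⟨y, rfl, hxy, -, -⟩ | ⟨h, -⟩ | ⟨h, -⟩ | ⟨h, -⟩ | ⟨h, -⟩)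
                · exact ⟨y, hxy, rfl⟩
                exacts [absurd h hxa, absurd h hxa, absurd h hxc, absurd h hxd]
              · rintro ⟨y, hy, rfl⟩
                refine Or.inl ⟨y, rfl, hy, ?_, ?_⟩ <;>
                  · rw [Ne, Sym2.eq_iff]
                    push_neg
                    constructor
                    · exact fun h => absurd h hxa
                    · intro h
                      first
                        | exact absurd h hxc
                        | exact absurd h hxd
            rw [h0, Set.ncard_image_of_injective _ Sum.inl_injective, hc₁ x]
  -- connectivity
  have hreach_adj : ∀ x y, G₁.Adj x y → H.Reachable (Sum.inl x) (Sum.inl y) := by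
    intro x y hxy
    by_cases h1 : s(x, y) = s(a, c)
    · rw [Sym2.eq_iff] at h1
      have r1 : H.Adj (Sum.inl a) (Sum.inr 0) := (hchar a _).mpr (Or.inr (Or.inl ⟨rfl, rfl⟩))
      have r2 : H.Adj (Sum.inr 0) (Sum.inl c) := (hchar0 _).mpr (Or.inr (Or.inr rfl))
      rcases h1 with ⟨rfl, rfl⟩ | ⟨rfl, rfl⟩
      · exact r1.reachable.trans r2.reachable
      · exact (r1.reachable.trans r2.reachable).symm
    · by_cases h2 : s(x, y) = s(a, d)
      · rw [Sym2.eq_iff] at h2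
        have r1 : H.Adj (Sum.inl a) (Sum.inr 1) :=
          (hchar a _).mpr (Or.inr (Or.inr (Or.inl ⟨rfl, rfl⟩)))
        have r2 : H.Adj (Sum.inr 1) (Sum.inl d) := (hchar1 _).mpr (Or.inr (Or.inr rfl))
        rcases h2 with ⟨rfl, rfl⟩ | ⟨rfl, rfl⟩
        · exact r1.reachable.trans r2.reachable
        · exact (r1.reachable.trans r2.reachable).symm
      · exact ((hchar x _).mpr (Or.inl ⟨y, rfl, hxy, h1, h2⟩)).reachable
  have hlift : ∀ x y, G₁.Walk x y → H.Reachable (Sum.inl x) (Sum.inl y) := by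
    intro x y w
    induction w with
    | nil => exact Reachable.refl _
    | cons h _ ih => exact (hreach_adj _ _ h).trans ih
  have hconn : H.Connected := by
    rw [connected_iff]
    refine ⟨?_, ⟨Sum.inl a⟩⟩
    have key : ∀ p, H.Reachable (Sum.inl a) p := by
      intro p
      cases p with
      | inl x =>
        obtain ⟨w⟩ := h₁.preconnected a x
        exact hlift _ _ w
      | inr i =>
        fin_cases i
        · show H.Reachable (Sum.inl a) (Sum.inr 0)
          exact ((hchar a _).mpr (Or.inr (Or.inl ⟨rfl, rfl⟩))).reachable
        · show H.Reachable (Sum.inl a) (Sum.inr 1)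
          exact ((hchar a _).mpr (Or.inr (Or.inr (Or.inl ⟨rfl, rfl⟩)))).reachable
    intro p q
    exact (key p).symm.trans (key q)
  -- the bridge
  refine ⟨hconn, hcub, ?_⟩
  rw [isBridge_iff]
  intro hre
  have step : ∀ p q, (H \ fromEdgeSet {s(Sum.inl a, Sum.inl b)}).Adj p q →
      (G₁ \ fromEdgeSet {s(a, b)}).Reachable (Sum.elim id (fun _ => a) p)
        (Sum.elim id (fun _ => a) q) := by
    intro p q h
    rw [sdiff_adj] at h
    obtain ⟨hadj, hdel⟩ := h
    have hsne : s(p, q) ≠ s(Sum.inl a, Sum.inl b) := by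
      intro he
      exact hdel ((fromEdgeSet_adj _).mpr ⟨by simp [he], hadj.ne⟩)
    have hrc : (G₁ \ fromEdgeSet {s(a, b)}).Reachable a c := by
      refine Adj.reachable ?_
      rw [sdiff_adj]
      refine ⟨hac, ?_⟩
      rw [fromEdgeSet_adj]
      rintro ⟨hm, -⟩
      rw [Set.mem_singleton_iff, Sym2.eq_iff] at hm
      rcases hm with ⟨-, h⟩ | ⟨h, -⟩
      exacts [hcb h, hanb h]
    have hrd : (G₁ \ fromEdgeSet {s(a, b)}).Reachable a d := by
      refine Adj.reachable ?_
      rw [sdiff_adj]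
      refine ⟨had, ?_⟩
      rw [fromEdgeSet_adj]
      rintro ⟨hm, -⟩
      rw [Set.mem_singleton_iff, Sym2.eq_iff] at hm
      rcases hm with ⟨-, h⟩ | ⟨h, -⟩
      exacts [hdb h, hanb h]
    cases p with
    | inl x =>
      rcases (hchar x q).mp hadj with ⟨y, rfl, hxy, -, -⟩ | ⟨rfl, rfl⟩ | ⟨rfl, rfl⟩ |
        ⟨rfl, rfl⟩ | ⟨rfl, rfl⟩
      · simp only [Sum.elim_inl, id]
        refine Adj.reachable ?_
        rw [sdiff_adj]
        refine ⟨hxy, ?_⟩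
        rw [fromEdgeSet_adj]
        rintro ⟨hm, -⟩
        rw [Set.mem_singleton_iff] at hm
        exact hsne (by rw [← Sym2.map_pair_eq Sum.inl, hm, Sym2.map_pair_eq])
      · exact Reachable.refl _
      · exact Reachable.refl _
      · exact hrc.symm
      · exact hrd.symm
    | inr i =>
      fin_cases i
      · rw [show ((⟨0, by decide⟩ : Fin 2)) = 0 from rfl] at hadj ⊢
        rcases (hchar0 q).mp hadj with rfl | rfl | rfl
        · exact Reachable.refl _
        · exact Reachable.refl _
        · exact hrc
      · rw [show ((⟨1, by decide⟩ : Fin 2)) = 1 from rfl] at hadj ⊢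
        rcases (hchar1 q).mp hadj with rfl | rfl | rfl
        · exact Reachable.refl _
        · exact Reachable.refl _
        · exact hrd
  have lift2 : ∀ (p q : V₁ ⊕ Fin 2), (H \ fromEdgeSet {s(Sum.inl a, Sum.inl b)}).Walk p q →
      (G₁ \ fromEdgeSet {s(a, b)}).Reachable (Sum.elim id (fun _ => a) p)
        (Sum.elim id (fun _ => a) q) := by
    intro p q w
    induction w with
    | nil => exact Reachable.refl _
    | cons h _ ih => exact (step _ _ h).trans ih
  obtain ⟨w⟩ := hre
  exact hnr (lift2 _ _ w)
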